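/- Let G be a connected finite graph (multiple edges allowed, no loops) with a cutedge x₁x₂, let G₁ and G₂ be the components of G − x₁x₂ with x₁ ∈ V(G₁) and x₂ ∈ V(G₂), let i ∈ {1,2}, wᵢ ∈ V(Gᵢ), and λᵢ ∈ {0,1}. Assume that every connected graph with fewer vertices than G that is not regular bipartite has, for every choice of root vertex and type, a spanning weakly even rooted tree. Then there is a spanning (wᵢ,λᵢ)-tree Tᵢ of Gᵢ such that no vertex of Tᵢ other than possibly xᵢ is a type-1 leaf of Tᵢ with maximum degree in G. -/

import Mathlib

/-- A multigraph on vertex type `V` with edge type `E`: each edge is assigned an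
unordered pair of distinct endpoints (multiple edges allowed, no loops). -/
structure Multigraph (V : Type) (E : Type) where
  inc : E → Sym2 V
  loopless : ∀ e : E, ¬ (inc e).IsDiag

namespace Multigraph

variable {V E : Type}

/-- `u` and `v` are joined by an edge belonging to the edge set `S`. -/
def AdjOn (G : Multigraph V E) (S : Set E) (u v : V) : Prop :=
  ∃ e ∈ S, G.inc e = s(u, v)

/-- `v` is reachable from `u` using edges in `S`. -/
def ReachOn (G : Multigraph V E) (S : Set E) (u v : V) : Prop :=
  Relation.ReflTransGen (G.AdjOn S) u v

/-- `G` is connected. -/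
def Connected (G : Multigraph V E) : Prop :=
  Nonempty V ∧ ∀ u v : V, G.ReachOn Set.univ u v

/-- The degree of `v` in the spanning subgraph with edge set `S`. -/
noncomputable def degOn (G : Multigraph V E) (S : Set E) (v : V) : ℕ :=
  {e ∈ S | v ∈ G.inc e}.ncard

/-- The degree of `v` in `G`. -/
noncomputable def degree (G : Multigraph V E) (v : V) : ℕ :=
  G.degOn Set.univ v

/-- The maximum degree `Δ(G)`. -/
noncomputable def maxDegree (G : Multigraph V E) [Fintype V] : ℕ :=
  Finset.univ.sup G.degree

/-- `G` is regular. -/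
def IsRegular (G : Multigraph V E) : Prop :=
  ∃ r : ℕ, ∀ v : V, G.degree v = r

/-- The 2-colouring `c` is proper on the edge set `S`: the two endpoints of any
edge of `S` receive different colours. -/
def ProperOn (G : Multigraph V E) (S : Set E) (c : V → Bool) : Prop :=
  ∀ e ∈ S, ∀ u v : V, G.inc e = s(u, v) → c u ≠ c v

/-- `G` is bipartite. -/
def IsBipartite (G : Multigraph V E) : Prop :=
  ∃ c : V → Bool, G.ProperOn Set.univ c

/-- The sub-multigraph of `G` with vertex set `U` and edge set `S` is a tree:
`U` is nonempty, every edge of `S` joins vertices of `U`, any two vertices of `U`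
are joined by a walk using edges of `S`, and there are exactly `|U| - 1` edges
(which forces acyclicity, and in particular forbids parallel edges in `S`). -/
structure IsTree (G : Multigraph V E) (U : Set V) (S : Set E) : Prop where
  nonempty : U.Nonempty
  edges_in : ∀ e ∈ S, ∀ v : V, v ∈ G.inc e → v ∈ U
  conn : ∀ u ∈ U, ∀ v ∈ U, G.ReachOn S u v
  card_eq : S.ncard + 1 = U.ncard

/-- `v` is a leaf of the subgraph with edge set `S`. -/
def IsLeaf (G : Multigraph V E) (S : Set E) (v : V) : Prop :=
  G.degOn S v = 1

/-- `e` is a cutedge: after removing `e`, some pair of vertices is separated. -/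
def IsCutedge (G : Multigraph V E) (e : E) : Prop :=
  ∃ u v : V, ¬ G.ReachOn {e}ᶜ u v

/-- `G` is 2-edge-connected: connected and without cutedges. -/
def TwoEdgeConnected (G : Multigraph V E) : Prop :=
  G.Connected ∧ ∀ e : E, ¬ G.IsCutedge e

/-- The edge set `S` is a weak 2-factor of `G`: every vertex has degree at most
2 in `S` (equivalently, every component of the spanning subgraph is a path —
possibly a single vertex — or a cycle), and every vertex of degree less than 2
in `S` (i.e. every endvertex of a path component) has degree less than `Δ(G)`
in `G`. -/
def IsWeakTwoFactor (G : Multigraph V E) [Fintype V] (S : Set E) : Prop :=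
  ∀ v : V, G.degOn S v ≤ 2 ∧ (G.degOn S v < 2 → G.degree v < G.maxDegree)

end Multigraph


namespace Multigraph

variable {V E : Type}

lemma sym2_exists_eq {V : Type} (z : Sym2 V) : ∃ a b : V, z = s(a, b) :=
  Sym2.ind (fun a b => ⟨a, b, rfl⟩) z

lemma AdjOn.symm {G : Multigraph V E} {S : Set E} {u v : V} (h : G.AdjOn S u v) :
    G.AdjOn S v u := by
  obtain ⟨e, he, hi⟩ := h
  exact ⟨e, he, by rw [hi, Sym2.eq_swap]⟩

lemma ReachOn.symm {G : Multigraph V E} {S : Set E} {u v : V} (h : G.ReachOn S u v) :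
    G.ReachOn S v u :=
  by
  haveI : Std.Symm (G.AdjOn S) := ⟨fun _ _ h => h.symm⟩
  exact (Relation.ReflTransGen.stdSymm (r := G.AdjOn S)).symm _ _ h

lemma ReachOn.trans' {G : Multigraph V E} {S : Set E} {u v w : V} (h : G.ReachOn S u v)
    (h' : G.ReachOn S v w) : G.ReachOn S u w :=
  Relation.ReflTransGen.trans h h'

lemma ReachOn.mono' {G : Multigraph V E} {S T : Set E} (hST : S ⊆ T) {u v : V}
    (h : G.ReachOn S u v) : G.ReachOn T u v :=
  Relation.ReflTransGen.mono (r := G.AdjOn S) (p := G.AdjOn T)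
    (fun _ _ hab => by obtain ⟨e, he, hi⟩ := hab; exact ⟨e, hST he, hi⟩) _ _ h

lemma exists_boundary_edge {G : Multigraph V E} {T : Set E} {x a : V} {U : Set V}
    (hx : x ∈ U) (h : G.ReachOn T x a) (ha : a ∉ U) :
    ∃ (p q : V) (e : E), p ∈ U ∧ q ∉ U ∧ e ∈ T ∧ G.inc e = s(p, q) := by
  induction h with
  | refl => exact absurd hx ha
  | @tail b c hxb hbc ih =>
    by_cases hb : b ∈ U
    · obtain ⟨e, he, hi⟩ := hbc
      exact ⟨b, c, e, hb, ha, he, hi⟩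
    · exact ih hb

def edgesIn (G : Multigraph V E) (A : Set V) : Set E :=
  {e | ∀ v ∈ G.inc e, v ∈ A}

noncomputable def restrict (G : Multigraph V E) (A : Set V) :
    Multigraph A (G.edgesIn A) where
  inc e := (G.inc e.1).attachWith e.2
  loopless e h := G.loopless e.1 (by
    have h2 := Sym2.IsDiag.map (f := Subtype.val) h
    convert h2 using 1; exact (Sym2.attachWith_map_subtypeVal _).symm)

lemma restrict_inc_map (G : Multigraph V E) (A : Set V) (e : ↥(G.edgesIn A)) :
    Sym2.map Subtype.val ((G.restrict A).inc e) = G.inc e.1 :=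
  Sym2.attachWith_map_subtypeVal _

lemma restrict_inc_eq (G : Multigraph V E) (A : Set V) (e : ↥(G.edgesIn A)) {a b : V}
    (ha : a ∈ A) (hb : b ∈ A) (h : G.inc e.1 = s(a, b)) :
    (G.restrict A).inc e = s(⟨a, ha⟩, ⟨b, hb⟩) := by
  apply Sym2.map.injective Subtype.val_injective
  rw [restrict_inc_map, h, Sym2.map_pair_eq]

lemma restrict_inc_eq' (G : Multigraph V E) (A : Set V) (e : ↥(G.edgesIn A)) {a b : ↥A}
    (h : (G.restrict A).inc e = s(a, b)) : G.inc e.1 = s(a.1, b.1) := by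
  rw [← restrict_inc_map, h, Sym2.map_pair_eq]

lemma restrict_mem_inc (G : Multigraph V E) (A : Set V) (e : ↥(G.edgesIn A)) (v : ↥A) :
    v ∈ (G.restrict A).inc e ↔ v.1 ∈ G.inc e.1 := by
  constructor
  · intro hv
    rw [← restrict_inc_map G A e]
    exact Sym2.mem_map.2 ⟨v, hv, rfl⟩
  · intro h
    rw [← restrict_inc_map G A e] at h
    obtain ⟨a, ha, hav⟩ := Sym2.mem_map.1 h
    have hav' : a = v := Subtype.val_injective hav
    rwa [hav'] at ha

lemma degOn_restrict (G : Multigraph V E) (A : Set V) (S' : Set ↥(G.edgesIn A)) (v : ↥A) :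
    (G.restrict A).degOn S' v = G.degOn (Subtype.val '' S') v.1 := by
  unfold degOn
  rw [← Set.ncard_image_of_injective _ Subtype.val_injective]
  congr 1
  ext e
  constructor
  · rintro ⟨e', ⟨he', hv⟩, rfl⟩
    exact ⟨⟨e', he', rfl⟩, (restrict_mem_inc G A e' v).1 hv⟩
  · rintro ⟨⟨e', he', rfl⟩, hv⟩
    exact ⟨e', ⟨he', (restrict_mem_inc G A e' v).2 hv⟩, rfl⟩

lemma degree_restrict (G : Multigraph V E) (A : Set V) (v : ↥A) :
    (G.restrict A).degree v = G.degOn (G.edgesIn A) v.1 := by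
  unfold degree
  rw [degOn_restrict]
  congr 1
  exact Subtype.coe_image_univ _

lemma degOn_mono (G : Multigraph V E) [Fintype E] {S T : Set E} (h : S ⊆ T) (v : V) :
    G.degOn S v ≤ G.degOn T v :=
  Set.ncard_le_ncard (fun e ⟨he, hv⟩ => ⟨h he, hv⟩) (Set.toFinite _)

lemma degOn_eq_degree (G : Multigraph V E) {S : Set E} {v : V}
    (h : ∀ e, v ∈ G.inc e → e ∈ S) : G.degOn S v = G.degree v := by
  unfold degree degOn
  congr 1
  ext e
  simp only [Set.mem_setOf_eq, Set.mem_univ, true_and]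
  exact ⟨fun hh => hh.2, fun hv => ⟨h e hv, hv⟩⟩

lemma grow_tree (G : Multigraph V E) [Fintype V] [Fintype E] (T : Set E) (x : V) :
    ∀ n : ℕ, ∀ U : Set V, ∀ S : Set E,
      x ∈ U → U ⊆ {v | G.ReachOn T x v} → S ⊆ T →
      (∀ e ∈ S, ∀ v ∈ G.inc e, v ∈ U) →
      (∀ u ∈ U, ∀ v ∈ U, G.ReachOn S u v) →
      S.ncard + 1 = U.ncard →
      {v | G.ReachOn T x v}.ncard ≤ U.ncard + n →
      ∃ S' : Set E, S' ⊆ T ∧ G.IsTree {v | G.ReachOn T x v} S' := by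
  intro n
  induction n with
  | zero =>
    intro U S hx hUA hST hedges hconn hcard hbound
    have hUA' : U = {v | G.ReachOn T x v} :=
      Set.eq_of_subset_of_ncard_le hUA (by omega) (Set.toFinite _)
    refine ⟨S, hST, ?_⟩
    rw [← hUA']
    exact ⟨⟨x, hx⟩, hedges, hconn, hcard⟩
  | succ n ih =>
    intro U S hx hUA hST hedges hconn hcard hbound
    by_cases hU : U = {v | G.ReachOn T x v}
    · refine ⟨S, hST, ?_⟩
      rw [← hU]
      exact ⟨⟨x, hx⟩, hedges, hconn, hcard⟩
    · obtain ⟨a, haA, haU⟩ := Set.exists_of_ssubset (hUA.ssubset_of_ne hU)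
      obtain ⟨p, q, e, hp, hq, heT, hi⟩ := exists_boundary_edge hx haA haU
      have hqA : q ∈ {v | G.ReachOn T x v} :=
        Relation.ReflTransGen.tail (hUA hp) ⟨e, heT, hi⟩
      have heS : e ∉ S := fun heS =>
        hq (hedges e heS q (by rw [hi]; exact Sym2.mem_mk_right p q))
      apply ih (insert q U) (insert e S) (Set.mem_insert_of_mem q hx)
        (Set.insert_subset_iff.mpr ⟨hqA, hUA⟩) (Set.insert_subset_iff.mpr ⟨heT, hST⟩)
      · intro e' he' v hv
        rcases Set.mem_insert_iff.1 he' with rfl | he'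
        · rw [hi, Sym2.mem_iff] at hv
          rcases hv with rfl | rfl
          · exact Set.mem_insert_of_mem _ hp
          · exact Set.mem_insert _ _
        · exact Set.mem_insert_of_mem q (hedges e' he' v hv)
      · have hstep : G.AdjOn (insert e S) q p :=
          ⟨e, Set.mem_insert e S, by rw [hi, Sym2.eq_swap]⟩
        have key : ∀ u ∈ insert q U, G.ReachOn (insert e S) u p := by
          intro u hu
          rcases Set.mem_insert_iff.1 hu with rfl | hu
          · exact Relation.ReflTransGen.single hstep
          · exact (hconn u hu p hp).mono' (Set.subset_insert e S)
        intro u hu v hv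
        exact (key u hu).trans' (key v hv).symm
      · rw [Set.ncard_insert_of_notMem heS (Set.toFinite S),
            Set.ncard_insert_of_notMem hq (Set.toFinite U)]
        omega
      · rw [Set.ncard_insert_of_notMem hq (Set.toFinite U)]
        omega

lemma exists_spanning_tree (G : Multigraph V E) [Fintype V] [Fintype E] (T : Set E) (x : V) :
    ∃ S : Set E, S ⊆ T ∧ G.IsTree {v | G.ReachOn T x v} S := by
  apply grow_tree G T x {v | G.ReachOn T x v}.ncard {x} ∅ (Set.mem_singleton x)
    (Set.singleton_subset_iff.2 Relation.ReflTransGen.refl) (Set.empty_subset T)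
    (fun e he => absurd he (Set.notMem_empty e))
  · intro u hu v hv
    rw [Set.eq_of_mem_singleton hu, Set.eq_of_mem_singleton hv]
    exact Relation.ReflTransGen.refl
  · rw [Set.ncard_empty, Set.ncard_singleton]
  · rw [Set.ncard_singleton]
    omega

lemma reach_of_reach_endpoints (G : Multigraph V E) (hconn : G.Connected) {e0 : E} {x1 x2 : V}
    (he0 : G.inc e0 = s(x1, x2)) (h12 : G.ReachOn {e0}ᶜ x1 x2) (u v : V) :
    G.ReachOn {e0}ᶜ u v := by
  have h := hconn.2 u v
  induction h with
  | refl => exact Relation.ReflTransGen.refl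
  | @tail b c hub hbc ih =>
    refine ih.trans' ?_
    obtain ⟨e, -, hi⟩ := hbc
    by_cases he : e = e0
    · subst he
      rw [he0] at hi
      rcases Sym2.eq_iff.1 hi with ⟨rfl, rfl⟩ | ⟨rfl, rfl⟩
      · exact h12
      · exact h12.symm
    · exact Relation.ReflTransGen.single ⟨e, he, hi⟩

end Multigraph

theorem main_aux {V E : Type} [Fintype V] [Fintype E]
    (G : Multigraph V E)
    (e0 : E) (x y : V) (he0 : G.inc e0 = s(x, y)) (hnr : ¬ G.ReachOn {e0}ᶜ x y)
    (IH : ∀ (V' E' : Type) [Fintype V'] [Fintype E'] (G' : Multigraph V' E'),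
      Fintype.card V' < Fintype.card V →
      G'.Connected → ¬ (G'.IsRegular ∧ G'.IsBipartite) →
      ∀ (w' : V') (lam' : Bool),
        ∃ (S' : Set E') (c' : V' → Bool),
          G'.IsTree Set.univ S' ∧ G'.ProperOn S' c' ∧ c' w' = lam' ∧
          ∀ v : V', G'.IsLeaf S' v → G'.degree v = G'.maxDegree → c' v = false)
    (wi : V) (lami : Bool) (hwi : wi ∈ {v : V | G.ReachOn {e0}ᶜ x v}) :
    ∃ (S : Set E) (c : V → Bool),
      e0 ∉ S ∧ G.IsTree {v : V | G.ReachOn {e0}ᶜ x v} S ∧ G.ProperOn S c ∧ c wi = lami ∧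
      ∀ v : V, v ≠ x → G.IsLeaf S v → G.degree v = G.maxDegree → c v = false := by
  classical
  open Multigraph in
  set A : Set V := {v : V | G.ReachOn {e0}ᶜ x v} with hA
  have hxA : x ∈ A := Relation.ReflTransGen.refl
  have hyA : y ∉ A := hnr
  have hclosed : ∀ {u v : V}, u ∈ A → G.AdjOn {e0}ᶜ u v → v ∈ A :=
    fun hu hadj => Relation.ReflTransGen.tail hu hadj
  have hne : ∀ {e : E} {a b : V}, e ≠ e0 → G.inc e = s(a, b) → a ∈ A → b ∈ A :=
    fun hne hi ha => hclosed ha ⟨_, hne, hi⟩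
  have hmemE : ∀ {e : E} {v : V}, e ≠ e0 → v ∈ A → v ∈ G.inc e → e ∈ G.edgesIn A := by
    intro e v hne0 hv hvi
    obtain ⟨a, b, hab⟩ := Multigraph.sym2_exists_eq (G.inc e)
    rw [hab, Sym2.mem_iff] at hvi
    intro w hw
    rw [hab, Sym2.mem_iff] at hw
    have hall : a ∈ A ∧ b ∈ A := by
      rcases hvi with rfl | rfl
      · exact ⟨hv, hne hne0 hab hv⟩
      · exact ⟨hne hne0 (hab.trans Sym2.eq_swap) hv, hv⟩
    rcases hw with rfl | rfl
    · exact hall.1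
    · exact hall.2
  have he0E : e0 ∉ G.edgesIn A :=
    fun h => hyA (h y (by rw [he0]; exact Sym2.mem_mk_right x y))
  have hAedge : ∀ {e : E} {v : V}, v ∈ A → v ≠ x → v ∈ G.inc e → e ∈ G.edgesIn A := by
    intro e v hv hvx hvi
    rcases eq_or_ne e e0 with rfl | hne0
    · rw [he0, Sym2.mem_iff] at hvi
      rcases hvi with rfl | rfl
      · exact absurd rfl hvx
      · exact absurd hv hyA
    · exact hmemE hne0 hv hvi
  haveI : Fintype ↥A := Fintype.ofFinite _
  haveI : Fintype ↥(G.edgesIn A) := Fintype.ofFinite _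
  have hdegA : ∀ (v : V) (hv : v ∈ A), v ≠ x → (G.restrict A).degree ⟨v, hv⟩ = G.degree v := by
    intro v hv hvx
    rw [Multigraph.degree_restrict]
    exact Multigraph.degOn_eq_degree G (fun e he => hAedge hv hvx he)
  have hdegle : ∀ v' : ↥A, (G.restrict A).degree v' ≤ G.degree v'.1 := by
    intro v'
    rw [Multigraph.degree_restrict]
    exact Multigraph.degOn_mono G (Set.subset_univ _) v'.1
  have hmaxle : (G.restrict A).maxDegree ≤ G.maxDegree := by
    apply Finset.sup_le
    intro v' _
    exact le_trans (hdegle v') (Finset.le_sup (Finset.mem_univ v'.1))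
  have hlift : ∀ {u v : V} (hu : u ∈ A), G.ReachOn {e0}ᶜ u v →
      ∃ hv : v ∈ A, (G.restrict A).ReachOn Set.univ ⟨u, hu⟩ ⟨v, hv⟩ := by
    intro u v hu h
    induction h with
    | refl => exact ⟨hu, Relation.ReflTransGen.refl⟩
    | @tail b c hub hbc ih =>
      obtain ⟨hb, hr⟩ := ih
      obtain ⟨e, he, hi⟩ := hbc
      have hcA : c ∈ A := hne he hi hb
      have heE : e ∈ G.edgesIn A :=
        hmemE he hb (by rw [hi]; exact Sym2.mem_mk_left b c)
      exact ⟨hcA, Relation.ReflTransGen.tail hr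
        ⟨⟨e, heE⟩, Set.mem_univ _, Multigraph.restrict_inc_eq G A ⟨e, heE⟩ hb hcA hi⟩⟩
  have hconn' : (G.restrict A).Connected := by
    refine ⟨⟨⟨x, hxA⟩⟩, ?_⟩
    rintro ⟨u, hu⟩ ⟨v, hv⟩
    obtain ⟨hu2, hxu'⟩ := hlift hxA hu
    obtain ⟨hv2, hxv'⟩ := hlift hxA hv
    exact hxu'.symm.trans' hxv'
  by_cases hrb : (G.restrict A).IsRegular ∧ (G.restrict A).IsBipartite
  · -- regular bipartite component: take any spanning tree
    obtain ⟨⟨r, hreg⟩, ⟨c0, hc0⟩⟩ := hrb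
    obtain ⟨S, hST, htree⟩ := Multigraph.exists_spanning_tree G {e0}ᶜ x
    set d : Bool := xor (c0 ⟨wi, hwi⟩) lami with hd
    refine ⟨S, fun v => if h : v ∈ A then xor (c0 ⟨v, h⟩) d else false,
      fun hmem => (hST hmem) rfl, htree, ?_, ?_, ?_⟩
    · intro e heS u v hi
      have huA : u ∈ A := htree.edges_in e heS u (by rw [hi]; exact Sym2.mem_mk_left u v)
      have hvA : v ∈ A := htree.edges_in e heS v (by rw [hi]; exact Sym2.mem_mk_right u v)
      have hne0 : e ≠ e0 := fun h => hST heS h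
      have heE : e ∈ G.edgesIn A := hmemE hne0 huA (by rw [hi]; exact Sym2.mem_mk_left u v)
      have hdiff := hc0 ⟨e, heE⟩ (Set.mem_univ _) ⟨u, huA⟩ ⟨v, hvA⟩
        (Multigraph.restrict_inc_eq G A ⟨e, heE⟩ huA hvA hi)
      simp only [dif_pos huA, dif_pos hvA]
      intro hcon
      apply hdiff
      have h2 := congrArg (fun t => xor t d) hcon
      simpa [Bool.xor_assoc] using h2
    · simp only [dif_pos hwi, hd]
      cases c0 ⟨wi, hwi⟩ <;> cases lami <;> rfl
    · intro v hvx hleaf hdeg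
      exfalso
      have hne1 : ({e ∈ S | v ∈ G.inc e}).Nonempty := by
        apply Set.nonempty_of_ncard_ne_zero
        have : G.degOn S v = 1 := hleaf
        unfold Multigraph.degOn at this
        omega
      obtain ⟨e, heS, hvi⟩ := hne1
      have hvA : v ∈ A := htree.edges_in e heS v hvi
      have hdv : G.degree v = r := by
        rw [← hdegA v hvA hvx]
        exact hreg ⟨v, hvA⟩
      have hxr : {e ∈ G.edgesIn A | x ∈ G.inc e}.ncard = r := by
        have h3 := hreg ⟨x, hxA⟩
        rw [Multigraph.degree_restrict] at h3
        exact h3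
      have hsub : insert e0 {e ∈ G.edgesIn A | x ∈ G.inc e} ⊆ {e ∈ Set.univ | x ∈ G.inc e} := by
        intro e' he'
        rcases Set.mem_insert_iff.1 he' with rfl | ⟨-, hx'⟩
        · exact ⟨Set.mem_univ _, by rw [he0]; exact Sym2.mem_mk_left x y⟩
        · exact ⟨Set.mem_univ _, hx'⟩
      have hcard2 := Set.ncard_le_ncard hsub (Set.toFinite _)
      rw [Set.ncard_insert_of_notMem (fun h => he0E h.1) (Set.toFinite _)] at hcard2
      have hdx : r + 1 ≤ G.degree x := by
        unfold Multigraph.degree Multigraph.degOn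
        omega
      have hmax : G.degree x ≤ G.maxDegree := Finset.le_sup (Finset.mem_univ x)
      omega
  · -- apply induction hypothesis to the component
    have hcard : Fintype.card ↥A < Fintype.card V := by
      have h1 : A.ncard < (Set.univ : Set V).ncard := by
        apply Set.ncard_lt_ncard _ (Set.toFinite _)
        exact Set.ssubset_univ_iff.2 (fun h => hyA (h.symm ▸ Set.mem_univ y))
      rwa [Set.ncard_univ, ← Nat.card_coe_set_eq, Nat.card_eq_fintype_card,
        Nat.card_eq_fintype_card] at h1
    obtain ⟨S', c', htree', hproper', hcwi', hleaf'⟩ :=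
      IH ↥A ↥(G.edgesIn A) (G.restrict A) hcard hconn' hrb ⟨wi, hwi⟩ lami
    refine ⟨Subtype.val '' S', fun v => if h : v ∈ A then c' ⟨v, h⟩ else false,
      ?_, ?_, ?_, ?_, ?_⟩
    · rintro ⟨e', -, he'⟩
      exact he0E (he' ▸ e'.2)
    · constructor
      · exact ⟨x, hxA⟩
      · rintro e ⟨e', he', rfl⟩ v hv
        exact e'.2 v hv
      · intro u hu v hv
        have hr := htree'.conn ⟨u, hu⟩ (Set.mem_univ _) ⟨v, hv⟩ (Set.mem_univ _)
        refine Relation.ReflTransGen.lift Subtype.val ?_ _ _ hr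
        rintro a b ⟨e', he'S, hi⟩
        exact ⟨e'.1, ⟨e', he'S, rfl⟩, Multigraph.restrict_inc_eq' G A e' hi⟩
      · rw [Set.ncard_image_of_injective _ Subtype.val_injective,
          show A.ncard = (Set.univ : Set ↥A).ncard from by
            rw [Set.ncard_univ, Nat.card_coe_set_eq]]
        exact htree'.card_eq
    · rintro e ⟨e', he'S, rfl⟩ u v hi
      have huA : u ∈ A := e'.2 u (by rw [hi]; exact Sym2.mem_mk_left u v)
      have hvA : v ∈ A := e'.2 v (by rw [hi]; exact Sym2.mem_mk_right u v)
      have hdiff := hproper' e' he'S ⟨u, huA⟩ ⟨v, hvA⟩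
        (Multigraph.restrict_inc_eq G A e' huA hvA hi)
      simp only [dif_pos huA, dif_pos hvA]
      exact hdiff
    · simp only [dif_pos hwi]
      exact hcwi'
    · intro v hvx hleaf hdeg
      have hne1 : ({e ∈ Subtype.val '' S' | v ∈ G.inc e}).Nonempty := by
        apply Set.nonempty_of_ncard_ne_zero
        have h5 : G.degOn (Subtype.val '' S') v = 1 := hleaf
        unfold Multigraph.degOn at h5
        omega
      obtain ⟨e, heS, hvi⟩ := hne1
      obtain ⟨e', he'S, rfl⟩ := heS
      have hvA : v ∈ A := e'.2 v hvi
      simp only [dif_pos hvA]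
      apply hleaf' ⟨v, hvA⟩
      · show (G.restrict A).degOn S' ⟨v, hvA⟩ = 1
        rw [Multigraph.degOn_restrict]
        exact hleaf
      · have h1 : (G.restrict A).degree ⟨v, hvA⟩ = G.degree v := hdegA v hvA hvx
        have h2 : (G.restrict A).degree ⟨v, hvA⟩ ≤ (G.restrict A).maxDegree :=
          Finset.le_sup (Finset.mem_univ _)
        omega

/-- Let `G` be a connected multigraph with a cutedge `e0` with
endpoints `x1, x2`, and let `G₁`, `G₂` be the components of `G - e0` containing
`x1` and `x2` respectively (their vertex sets are the sets of vertices reachable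
from `x1`, resp. `x2`, without using `e0`). Let `i ∈ {1,2}` (encoded by
`i : Fin 2`, with `i = 0` for `G₁`), `wi ∈ V(Gᵢ)` and `lami ∈ {0,1}` (with
`false` for type 0 and `true` for type 1). Assume the induction hypothesis: every
connected multigraph with fewer vertices than `G` that is not regular bipartite
has, for every root vertex and type, a spanning weakly even rooted tree. Then
`Gᵢ` has a spanning `(wi, lami)`-tree `Tᵢ` (with edge set `S` and bipartition
`c`) such that no vertex of `Tᵢ` other than possibly `xᵢ` is a type-1 leaf of
`Tᵢ` having maximum degree in `G`. -/
theorem component_spanning_tree_claim {V E : Type} [Fintype V] [Fintype E]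
    (G : Multigraph V E) (hconn : G.Connected)
    (e0 : E) (x1 x2 : V) (he0 : G.inc e0 = s(x1, x2)) (hcut : G.IsCutedge e0)
    (IH : ∀ (V' E' : Type) [Fintype V'] [Fintype E'] (G' : Multigraph V' E'),
      Fintype.card V' < Fintype.card V →
      G'.Connected → ¬ (G'.IsRegular ∧ G'.IsBipartite) →
      ∀ (w' : V') (lam' : Bool),
        ∃ (S' : Set E') (c' : V' → Bool),
          G'.IsTree Set.univ S' ∧ G'.ProperOn S' c' ∧ c' w' = lam' ∧
          ∀ v : V', G'.IsLeaf S' v → G'.degree v = G'.maxDegree → c' v = false)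
    (i : Fin 2) (wi : V) (lami : Bool)
    (hwi : wi ∈ {v : V | G.ReachOn {e0}ᶜ (if i = 0 then x1 else x2) v}) :
    ∃ (S : Set E) (c : V → Bool),
      e0 ∉ S ∧
      G.IsTree {v : V | G.ReachOn {e0}ᶜ (if i = 0 then x1 else x2) v} S ∧
      G.ProperOn S c ∧
      c wi = lami ∧
      ∀ v : V, v ≠ (if i = 0 then x1 else x2) →
        G.IsLeaf S v → G.degree v = G.maxDegree → c v = false := by
  have hnr : ¬ G.ReachOn {e0}ᶜ x1 x2 := by
    intro h
    obtain ⟨u, v, huv⟩ := hcut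
    exact huv (Multigraph.reach_of_reach_endpoints G hconn he0 h u v)
  fin_cases i
  · simp only [if_pos rfl] at hwi ⊢
    exact main_aux G e0 x1 x2 he0 hnr IH wi lami hwi
  · have h10 : ¬ ((1 : Fin 2) = 0) := by decide
    simp only [if_neg h10] at hwi ⊢
    exact main_aux G e0 x2 x1 (he0.trans Sym2.eq_swap)
      (fun h => hnr h.symm) IH wi lami hwi
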